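/- Let (V,Q) and (V',Q') be anisotropic non-degenerate equivariant quadratic KG-modules such that (V,Q) ⊥ (V',−Q') is metabolic. Then there exists a G-equivariant isometry f : (V,Q) → (V',Q'). In particular, each Witt equivalence class of equivariant quadratic forms contains at most one anisotropic representative up to isometry. -/

import Mathlib

open QuadraticMap

variable {K : Type*} [Field K] {G : Type*} [Group G]
variable {V W : Type*} [AddCommGroup V] [Module K V] [AddCommGroup W] [Module K W]

/-- `U` is a `KG`-submodule, i.e. invariant under the representation `ρ`. -/
def IsSubrep (ρ : Representation K G V) (U : Submodule K V) : Prop :=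
  ∀ g : G, ∀ v ∈ U, ρ g v ∈ U

/-- The quadratic form `Q` is `G`-invariant. -/
def GInvariantQF (ρ : Representation K G V) (Q : QuadraticForm K V) : Prop :=
  ∀ g v, Q (ρ g v) = Q v

/-- Orthogonal complement of a submodule with respect to the polarization of `Q`. -/
def qperp (Q : QuadraticForm K V) (U : Submodule K V) : Submodule K V :=
  LinearMap.BilinForm.orthogonal Q.polarBilin U

/-- `Q` is non-degenerate: the radical of its polarization is zero. -/
def QNondeg (Q : QuadraticForm K V) : Prop :=
  LinearMap.BilinForm.Nondegenerate Q.polarBilin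

/-- `(V, Q)` is metabolic: there is a `KG`-submodule `N` with `N = N^⊥` and `Q(N) = 0`. -/
def Metabolic (ρ : Representation K G V) (Q : QuadraticForm K V) : Prop :=
  ∃ N : Submodule K V, IsSubrep ρ N ∧ N = qperp Q N ∧ ∀ v ∈ N, Q v = 0

/-- `(V, Q)` is anisotropic: `Q` does not vanish on any non-zero `KG`-submodule. -/
def AnisotropicRep (ρ : Representation K G V) (Q : QuadraticForm K V) : Prop :=
  ∀ U : Submodule K V, IsSubrep ρ U → (∀ v ∈ U, Q v = 0) → U = ⊥

/-- The product (orthogonal direct sum) of two representations. -/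
def prodRep (ρ : Representation K G V) (σ : Representation K G W) :
    Representation K G (V × W) :=
  ⟨⟨fun g => (ρ g).prodMap (σ g), by ext v <;> simp⟩, fun g h => by ext v <;> simp⟩

/-- `V` is a simple `KG`-module. -/
def SimpleRep (ρ : Representation K G V) : Prop :=
  Nontrivial V ∧ ∀ U : Submodule K V, IsSubrep ρ U → U = ⊥ ∨ U = ⊤

/-- `V` is a self-dual `KG`-module. -/
def SelfDualRep (ρ : Representation K G V) : Prop :=
  ∃ f : V ≃ₗ[K] Module.Dual K V, ∀ g v, f (ρ g v) = ρ.dual g (f v)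

/-- two anisotropic equivariant quadratic modules whose difference is
metabolic are `G`-equivariantly isometric; in particular each Witt class contains at most
one anisotropic representative up to isometry. -/
theorem stmt4 [Finite G] [FiniteDimensional K V] [FiniteDimensional K W]
    (ρ : Representation K G V) (Q : QuadraticForm K V)
    (σ : Representation K G W) (Q' : QuadraticForm K W)
    (hinv : GInvariantQF ρ Q) (hnd : QNondeg Q) (han : AnisotropicRep ρ Q)
    (hinv' : GInvariantQF σ Q') (hnd' : QNondeg Q') (han' : AnisotropicRep σ Q')
    (hmet : Metabolic (prodRep ρ σ) (Q.prod (-Q'))) :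
    ∃ f : V ≃ₗ[K] W, (∀ g v, f (ρ g v) = σ g (f v)) ∧ ∀ v, Q' (f v) = Q v := by
  
  classical
  obtain ⟨N, hNrep, hNperp, hNiso⟩ := hmet
  -- action of prodRep
  have hact : ∀ (g : G) (p : V × W), (prodRep ρ σ) g p = (ρ g p.1, σ g p.2) := by
    intro g p; rfl
  -- Q.prod (-Q') evaluates
  have hQprod : ∀ p : V × W, (Q.prod (-Q')) p = Q p.1 - Q' p.2 := by
    intro p; simp [QuadraticMap.prod_apply, sub_eq_add_neg]
  -- key1 : (v, 0) ∈ N → v = 0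
  have key1 : ∀ v : V, (v, (0 : W)) ∈ N → v = 0 := by
    intro v hv
    have hU : N.comap (LinearMap.inl K V W) = ⊥ := by
      apply han
      · intro g x hx
        have := hNrep g _ hx
        rw [hact] at this
        simpa using this
      · intro x hx
        have := hNiso _ hx
        rw [hQprod] at this
        simpa using this
    have : v ∈ N.comap (LinearMap.inl K V W) := hv
    rw [hU] at this
    simpa using this
  have key2 : ∀ w : W, ((0 : V), w) ∈ N → w = 0 := by
    intro w hw
    have hU : N.comap (LinearMap.inr K V W) = ⊥ := by
      apply han'
      · intro g x hx
        have := hNrep g _ hx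
        rw [hact] at this
        simpa using this
      · intro x hx
        have := hNiso _ hx
        rw [hQprod] at this
        simpa using this
    have : w ∈ N.comap (LinearMap.inr K V W) := hw
    rw [hU] at this
    simpa using this
  -- uniqueness of coordinates
  have uniq2 : ∀ (v : V) (w w' : W), (v, w) ∈ N → (v, w') ∈ N → w = w' := by
    intro v w w' h1 h2
    have : ((0 : V), w - w') ∈ N := by
      have := N.sub_mem h1 h2
      simpa using this
    have := key2 _ this
    exact sub_eq_zero.mp this
  -- polar bilin of product, on mixed vectors
  have hpolar : ∀ (p q : V × W),
      (Q.prod (-Q')).polarBilin p q = Q.polarBilin p.1 q.1 - Q'.polarBilin p.2 q.2 := by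
    intro p q
    simp only [QuadraticMap.polarBilin_apply_apply, QuadraticMap.polar, hQprod,
      Prod.fst_add, Prod.snd_add]
    ring
  -- refl
  have hreflV : Q.polarBilin.IsRefl := by
    intro x y h
    rwa [QuadraticMap.polarBilin_apply_apply, QuadraticMap.polar_comm,
      ← QuadraticMap.polarBilin_apply_apply] at h
  have hreflW : Q'.polarBilin.IsRefl := by
    intro x y h
    rwa [QuadraticMap.polarBilin_apply_apply, QuadraticMap.polar_comm,
      ← QuadraticMap.polarBilin_apply_apply] at h
  -- surjectivity of first projection
  have hfst : N.map (LinearMap.fst K V W) = ⊤ := by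
    have horth : LinearMap.BilinForm.orthogonal Q.polarBilin (N.map (LinearMap.fst K V W)) = ⊥ := by
      rw [Submodule.eq_bot_iff]
      intro v hv
      have hv' : ((v, (0 : W))) ∈ qperp (Q.prod (-Q')) N := by
        intro p hp
        have h1 : Q.polarBilin p.1 v = 0 := hv p.1 ⟨p, hp, rfl⟩
        have : (Q.prod (-Q')).polarBilin p (v, 0) = 0 := by
          rw [hpolar]
          simp only [h1, QuadraticMap.polarBilin_apply_apply]
          simp [QuadraticMap.polar]
        exact this
      rw [← hNperp] at hv'
      exact key1 v hv'
    have hfin := LinearMap.BilinForm.finrank_orthogonal hnd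
      (N.map (LinearMap.fst K V W))
    rw [horth, finrank_bot] at hfin
    have hle := Submodule.finrank_le (N.map (LinearMap.fst K V W))
    exact Submodule.eq_top_of_finrank_eq (by omega)
  have hsnd : N.map (LinearMap.snd K V W) = ⊤ := by
    have horth : LinearMap.BilinForm.orthogonal Q'.polarBilin (N.map (LinearMap.snd K V W)) = ⊥ := by
      rw [Submodule.eq_bot_iff]
      intro w hw
      have hw' : (((0 : V), w)) ∈ qperp (Q.prod (-Q')) N := by
        intro p hp
        have h1 : Q'.polarBilin p.2 w = 0 := hw p.2 ⟨p, hp, rfl⟩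
        have : (Q.prod (-Q')).polarBilin p (0, w) = 0 := by
          rw [hpolar]
          simp only [h1, QuadraticMap.polarBilin_apply_apply]
          simp [QuadraticMap.polar]
        exact this
      rw [← hNperp] at hw'
      exact key2 w hw'
    have hfin := LinearMap.BilinForm.finrank_orthogonal hnd'
      (N.map (LinearMap.snd K V W))
    rw [horth, finrank_bot] at hfin
    have hle := Submodule.finrank_le (N.map (LinearMap.snd K V W))
    exact Submodule.eq_top_of_finrank_eq (by omega)
  -- build equivalences N ≃ V and N ≃ W
  let p₁ : N →ₗ[K] V := (LinearMap.fst K V W).comp N.subtype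
  have hp₁ : Function.Bijective p₁ := by
    constructor
    · intro ⟨x, hx⟩ ⟨y, hy⟩ hxy
      have h1 : x.1 = y.1 := hxy
      have h2 : x.2 = y.2 := uniq2 x.1 x.2 y.2 (by simpa using hx) (by rw [h1]; simpa using hy)
      exact Subtype.ext (Prod.ext h1 h2)
    · intro v
      have : v ∈ N.map (LinearMap.fst K V W) := by rw [hfst]; trivial
      obtain ⟨p, hp, rfl⟩ := this
      exact ⟨⟨p, hp⟩, rfl⟩
  let p₂ : N →ₗ[K] W := (LinearMap.snd K V W).comp N.subtype
  let e₁ : N ≃ₗ[K] V := LinearEquiv.ofBijective p₁ hp₁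
  let f : V ≃ₗ[K] W := e₁.symm.trans
    (LinearEquiv.ofBijective ((LinearMap.snd K V W).comp N.subtype) (by
      constructor
      · intro ⟨x, hx⟩ ⟨y, hy⟩ hxy
        have h2 : x.2 = y.2 := hxy
        have h1 : x.1 = y.1 := by
          by_contra hne
          -- use symmetric version of uniq2
          have : ((x.1 - y.1, (0 : W))) ∈ N := by
            have hm := N.sub_mem hx hy
            have he : x - y = (x.1 - y.1, (0 : W)) := by
              rw [Prod.ext_iff]; exact ⟨rfl, by simp [h2]⟩
            rwa [he] at hm
          exact hne (sub_eq_zero.mp (key1 _ this))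
        exact Subtype.ext (Prod.ext h1 h2)
      · intro w
        have : w ∈ N.map (LinearMap.snd K V W) := by rw [hsnd]; trivial
        obtain ⟨p, hp, rfl⟩ := this
        exact ⟨⟨p, hp⟩, rfl⟩))
  -- key property: (v, f v) ∈ N
  have hgraph : ∀ v : V, (v, f v) ∈ N := by
    intro v
    have h1 : (e₁.symm v : V × W) ∈ N := (e₁.symm v).2
    have h2 : (e₁.symm v : V × W).1 = v := e₁.apply_symm_apply v
    have h3 : f v = (e₁.symm v : V × W).2 := rfl
    have h4 : (e₁.symm v : V × W) = (v, f v) := Prod.ext h2 h3.symm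
    rwa [h4] at h1
  have hchar : ∀ (v : V) (w : W), (v, w) ∈ N → f v = w := by
    intro v w hvw
    exact uniq2 v (f v) w (hgraph v) hvw
  refine ⟨f, ?_, ?_⟩
  · intro g v
    apply hchar
    have := hNrep g _ (hgraph v)
    rw [hact] at this
    exact this
  · intro v
    have := hNiso _ (hgraph v)
    rw [hQprod] at this
    exact (sub_eq_zero.mp this).symm
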